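/- Let G be a group generated by elements a, x, y, z with a² = x² = y² = z² = 1 such that {a, x, y, z} is a sandwich set in G, with [a,x] = 1 and [a,y] = 1, with [[z,x],[z,a]] = 1 and [[z,y],[z,a]] = 1, and assume the centre of G is trivial. Then [z,a,x] = [z,x,a] and [z,a,y] = [z,y,a]. -/

import Mathlib

/-- Left-normed commutator: `[u,v] = u⁻¹v⁻¹uv`. -/
def cmt {G : Type*} [Group G] (u v : G) : G := u⁻¹ * v⁻¹ * u * v

/-- Conjugation: `u^g = g⁻¹ug`. -/
def cnj {G : Type*} [Group G] (u g : G) : G := g⁻¹ * u * g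

/-- A subgroup is nilpotent of class at most `n`. -/
def classLE {G : Type*} [Group G] (H : Subgroup G) (n : ℕ) : Prop :=
  Subgroup.lowerCentralSeries (⊤ : Subgroup ↥H) n = ⊥

/-- `X` is a sandwich set in `G`. -/
def IsSandwichSet {G : Type*} [Group G] (X : Set G) : Prop :=
  ∀ u ∈ X, ∀ v ∈ X, ∀ g ∈ Subgroup.closure X,
    classLE (Subgroup.closure ({u, cnj v g} : Set G)) 2

private lemma key {G : Type*} [Group G] (a x z : G)
    (hax : cmt a x = 1) (h1 : cmt (cmt z x) (cmt z a) = 1) :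
    cmt (cmt z a) x = cmt (cmt z x) a := by
  have hc : a * x = x * a := by
    have h : a⁻¹ * x⁻¹ * a * x = 1 := hax
    calc a * x = x * a * (a⁻¹ * x⁻¹ * a * x) := by group
    _ = x * a * 1 := by rw [h]
    _ = x * a := mul_one _
  have hcom : cmt z x * cmt z a = cmt z a * cmt z x := by
    have h : (cmt z x)⁻¹ * (cmt z a)⁻¹ * cmt z x * cmt z a = 1 := h1
    calc cmt z x * cmt z a
        = cmt z a * cmt z x * ((cmt z x)⁻¹ * (cmt z a)⁻¹ * cmt z x * cmt z a) := by group
    _ = cmt z a * cmt z x * 1 := by rw [h]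
    _ = cmt z a * cmt z x := mul_one _
  have hinv : (cmt z a)⁻¹ * (cmt z x)⁻¹ = (cmt z x)⁻¹ * (cmt z a)⁻¹ := by
    rw [← mul_inv_rev, ← mul_inv_rev, hcom]
  have A : cmt z x * (x⁻¹ * cmt z a * x) = cmt z a * (a⁻¹ * cmt z x * a) := by
    unfold cmt
    calc (z⁻¹ * x⁻¹ * z * x) * (x⁻¹ * (z⁻¹ * a⁻¹ * z * a) * x)
        = z⁻¹ * (a * x)⁻¹ * z * (a * x) := by group
    _ = z⁻¹ * (x * a)⁻¹ * z * (x * a) := by rw [hc]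
    _ = (z⁻¹ * a⁻¹ * z * a) * (a⁻¹ * (z⁻¹ * x⁻¹ * z * x) * a) := by group
  have hx' : x⁻¹ * cmt z a * x = (cmt z x)⁻¹ * (cmt z a * (a⁻¹ * cmt z x * a)) := by
    rw [← A]; group
  show (cmt z a)⁻¹ * x⁻¹ * cmt z a * x = (cmt z x)⁻¹ * a⁻¹ * cmt z x * a
  calc (cmt z a)⁻¹ * x⁻¹ * cmt z a * x
      = (cmt z a)⁻¹ * (x⁻¹ * cmt z a * x) := by group
  _ = (cmt z a)⁻¹ * ((cmt z x)⁻¹ * (cmt z a * (a⁻¹ * cmt z x * a))) := by rw [hx']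
  _ = ((cmt z a)⁻¹ * (cmt z x)⁻¹) * cmt z a * a⁻¹ * cmt z x * a := by group
  _ = ((cmt z x)⁻¹ * (cmt z a)⁻¹) * cmt z a * a⁻¹ * cmt z x * a := by rw [hinv]
  _ = (cmt z x)⁻¹ * a⁻¹ * cmt z x * a := by group

theorem stmt15 {G : Type*} [Group G] (a x y z : G)
    (hgen : Subgroup.closure ({a, x, y, z} : Set G) = ⊤)
    (ha : a ^ 2 = 1) (hx : x ^ 2 = 1) (hy : y ^ 2 = 1) (hz : z ^ 2 = 1)
    (hsand : IsSandwichSet ({a, x, y, z} : Set G))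
    (hax : cmt a x = 1) (hay : cmt a y = 1)
    (h1 : cmt (cmt z x) (cmt z a) = 1) (h2 : cmt (cmt z y) (cmt z a) = 1)
    (hcen : Subgroup.center G = ⊥) :
    cmt (cmt z a) x = cmt (cmt z x) a ∧ cmt (cmt z a) y = cmt (cmt z y) a :=
  ⟨key a x z hax h1, key a y z hay h2⟩
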